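/- arXiv:2002.12236 — 4 statements merged into one kernel-verified Lean document; each statement's English description precedes it below -/
import Mathlib

section
/- Let h : ℝ^m → ℝ be twice continuously differentiable with l·I ⪯ ∇²h(y) ⪯ L·I for all y, where 0 < l ≤ L. Let A : ℝ^{m×n}, b ∈ ℝ^m, and consider gradient descent x^{k+1} = x^k - (1/t)·Aᵀ∇h(Ax^k + b) with step size 1/t where t = (L·σ_max(A)² + l·σ_{min>0}(A)²)/2, where σ_{min>0}(A) denotes the smallest nonzero singular value of A. If x* is a minimizer of x ↦ h(Ax+b) with x^k - x* ∈ (ker A)^⊥ for all k, then ‖x^{k+1} - x*‖ ≤ ((φ-1)/(φ+1))·‖x^k - x*‖, where φ = (σ_max(A)/σ_{min>0}(A))² · (L/l). -/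
open Matrix RealInnerProductSpace

/-- Largest singular value of a real matrix. -/
noncomputable def sigmaMax {m n : ℕ} (A : Matrix (Fin m) (Fin n) ℝ) : ℝ :=
  Real.sqrt (sSup (Set.range (Matrix.isHermitian_conjTranspose_mul_self A).eigenvalues))

/-- Smallest nonzero singular value of a real matrix. -/
noncomputable def sigmaMinPos {m n : ℕ} (A : Matrix (Fin m) (Fin n) ℝ) : ℝ :=
  Real.sqrt (sInf {x : ℝ | 0 < x ∧
    x ∈ Set.range (Matrix.isHermitian_conjTranspose_mul_self A).eigenvalues})

lemma gd_transpose_eq_adj {m n : ℕ} (A : Matrix (Fin m) (Fin n) ℝ) :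
    Matrix.toEuclideanLin Aᵀ = LinearMap.adjoint (Matrix.toEuclideanLin A) := by
  rw [← Matrix.toEuclideanLin_conjTranspose_eq_adjoint,
    Matrix.conjTranspose_eq_transpose_of_trivial]

lemma gd_sq_norm_eq {m n : ℕ} (A : Matrix (Fin m) (Fin n) ℝ) (v : EuclideanSpace ℝ (Fin n)) :
    ⟪Matrix.toEuclideanLin (Aᵀ * A) v, v⟫ = ‖Matrix.toEuclideanLin A v‖ ^ 2 := by
  have h2 : Matrix.toEuclideanLin (Aᵀ * A) v
      = Matrix.toEuclideanLin Aᵀ (Matrix.toEuclideanLin A v) := by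
    simp [Matrix.toEuclideanLin_apply, Matrix.mulVec_mulVec]
  rw [h2, gd_transpose_eq_adj, LinearMap.adjoint_inner_left, real_inner_self_eq_norm_sq]

lemma gd_norm_expand {m n : ℕ} (A : Matrix (Fin m) (Fin n) ℝ) (v : EuclideanSpace ℝ (Fin n)) :
    ‖Matrix.toEuclideanLin A v‖ ^ 2
      = ∑ j, (Matrix.isHermitian_conjTranspose_mul_self A).eigenvalues j *
          ⟪(Matrix.isHermitian_conjTranspose_mul_self A).eigenvectorBasis j, v⟫ ^ 2 := by
  set hM := Matrix.isHermitian_conjTranspose_mul_self A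
  set lam := hM.eigenvalues
  set e := hM.eigenvectorBasis
  have heig : ∀ j, Matrix.toEuclideanLin (Aᵀ * A) (e j) = lam j • e j := by
    intro j
    have := hM.mulVec_eigenvectorBasis j
    apply (WithLp.equiv 2 _).injective
    simpa [Matrix.toEuclideanLin_apply, lam, e, hM] using this
  rw [← gd_sq_norm_eq]
  nth_rw 1 [← e.sum_repr' v]
  rw [map_sum, sum_inner]
  congr 1; ext j
  rw [LinearMap.map_smul, heig j, smul_smul, real_inner_smul_left]
  ring

lemma gd_vec_expand {n : ℕ} (b : OrthonormalBasis (Fin n) ℝ (EuclideanSpace ℝ (Fin n)))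
    (v : EuclideanSpace ℝ (Fin n)) : ‖v‖ ^ 2 = ∑ j, ⟪b j, v⟫ ^ 2 := by
  rw [← real_inner_self_eq_norm_sq]
  nth_rw 1 [← b.sum_repr' v]
  rw [sum_inner]
  congr 1; ext j
  rw [real_inner_smul_left, sq]

lemma gd_spectral_facts {m n : ℕ} (A : Matrix (Fin m) (Fin n) ℝ)
    (hex : ∃ j, (Matrix.isHermitian_conjTranspose_mul_self A).eigenvalues j ≠ 0) :
    0 < sigmaMinPos A ∧ sigmaMinPos A ≤ sigmaMax A ∧
    (∀ v, ‖Matrix.toEuclideanLin A v‖ ^ 2 ≤ sigmaMax A ^ 2 * ‖v‖ ^ 2) ∧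
    (∀ v ∈ (LinearMap.ker (Matrix.toEuclideanLin A))ᗮ,
      sigmaMinPos A ^ 2 * ‖v‖ ^ 2 ≤ ‖Matrix.toEuclideanLin A v‖ ^ 2) := by
  set hM := Matrix.isHermitian_conjTranspose_mul_self A with hhM
  set lam := hM.eigenvalues with hlam
  set e := hM.eigenvectorBasis with he
  have hpsd : (Aᵀ * A).PosSemidef := by
    rw [← Matrix.conjTranspose_eq_transpose_of_trivial]
    exact Matrix.posSemidef_conjTranspose_mul_self A
  have hnn : ∀ j, 0 ≤ lam j := fun j => hpsd.eigenvalues_nonneg j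
  have heig : ∀ j, Matrix.toEuclideanLin (Aᵀ * A) (e j) = lam j • e j := by
    intro j
    have := hM.mulVec_eigenvectorBasis j
    apply (WithLp.equiv 2 _).injective
    simpa [Matrix.toEuclideanLin_apply, lam, e, hM] using this
  have hnorm : ∀ v : EuclideanSpace ℝ (Fin n), ‖v‖ ^ 2 = ∑ j, ⟪e j, v⟫ ^ 2 :=
    fun v => gd_vec_expand e v
  have hAnorm : ∀ v : EuclideanSpace ℝ (Fin n),
      ‖Matrix.toEuclideanLin A v‖ ^ 2 = ∑ j, lam j * ⟪e j, v⟫ ^ 2 :=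
    fun v => gd_norm_expand A v
  have hkerj : ∀ j, lam j = 0 → e j ∈ LinearMap.ker (Matrix.toEuclideanLin A) := by
    intro j hj
    rw [LinearMap.mem_ker, ← norm_eq_zero]
    have : ‖Matrix.toEuclideanLin A (e j)‖ ^ 2 = 0 := by
      rw [← gd_sq_norm_eq, heig j, hj, zero_smul, inner_zero_left]
    exact pow_eq_zero_iff (two_ne_zero) |>.mp this
  obtain ⟨j0, hj0⟩ := hex
  have hj0' : 0 < lam j0 := lt_of_le_of_ne (hnn j0) (Ne.symm hj0)
  have e1 : sigmaMinPos A = Real.sqrt (sInf {x : ℝ | 0 < x ∧ x ∈ Set.range lam}) := rfl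
  have e2 : sigmaMax A = Real.sqrt (sSup (Set.range lam)) := rfl
  have hPfin : {x : ℝ | 0 < x ∧ x ∈ Set.range lam}.Finite :=
    (Set.finite_range lam).subset (fun x hx => hx.2)
  have hPne : {x : ℝ | 0 < x ∧ x ∈ Set.range lam}.Nonempty := ⟨lam j0, hj0', ⟨j0, rfl⟩⟩
  have hmem : sInf {x : ℝ | 0 < x ∧ x ∈ Set.range lam} ∈ {x : ℝ | 0 < x ∧ x ∈ Set.range lam} :=
    hPne.csInf_mem hPfin
  have hinfpos : 0 < sInf {x : ℝ | 0 < x ∧ x ∈ Set.range lam} := hmem.1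
  have hbddS : BddAbove (Set.range lam) := (Set.finite_range lam).bddAbove
  have hle : ∀ j, lam j ≤ sSup (Set.range lam) := fun j => le_csSup hbddS ⟨j, rfl⟩
  have hsupinf : sInf {x : ℝ | 0 < x ∧ x ∈ Set.range lam} ≤ sSup (Set.range lam) := by
    obtain ⟨j1, hj1⟩ := hmem.2
    rw [← hj1]; exact hle j1
  have hsq1 : sigmaMinPos A ^ 2 = sInf {x : ℝ | 0 < x ∧ x ∈ Set.range lam} := by
    rw [e1, Real.sq_sqrt hinfpos.le]
  have hsq2 : sigmaMax A ^ 2 = sSup (Set.range lam) := by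
    rw [e2, Real.sq_sqrt (le_trans hinfpos.le hsupinf)]
  refine ⟨by rw [e1]; exact Real.sqrt_pos.mpr hinfpos,
    by rw [e1, e2]; exact Real.sqrt_le_sqrt hsupinf, ?_, ?_⟩
  · intro v
    rw [hAnorm v, hsq2, hnorm v, Finset.mul_sum]
    exact Finset.sum_le_sum fun j _ => mul_le_mul_of_nonneg_right (hle j) (sq_nonneg _)
  · intro v hv
    have hc : ∀ j, lam j = 0 → ⟪e j, v⟫ = 0 := fun j hj =>
      (Submodule.mem_orthogonal _ v).mp hv _ (hkerj j hj)
    rw [hAnorm v, hsq1, hnorm v, Finset.mul_sum]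
    refine Finset.sum_le_sum fun j _ => ?_
    by_cases hj : lam j = 0
    · rw [hc j hj, hj]; ring_nf; exact le_refl 0
    · exact mul_le_mul_of_nonneg_right
        (csInf_le hPfin.bddBelow ⟨lt_of_le_of_ne (hnn j) (Ne.symm hj), ⟨j, rfl⟩⟩) (sq_nonneg _)

lemma gd_bilin_bound {V : Type*} [NormedAddCommGroup V] [InnerProductSpace ℝ V]
    (S : Submodule ℝ V) (Q : V → V → ℝ) (r : ℝ)
    (hadd : ∀ a b c, Q (a + b) c = Q a c + Q b c)
    (hsmul : ∀ (t : ℝ) a c, Q (t • a) c = t * Q a c)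
    (hsymm : ∀ a b, Q a b = Q b a)
    (hdiag : ∀ z ∈ S, |Q z z| ≤ r * ‖z‖ ^ 2)
    (v u : V) (hv : v ∈ S) (hu : u ∈ S) : Q v u ≤ r * ‖v‖ * ‖u‖ := by
  have hzero : ∀ c, Q 0 c = 0 := by
    intro c
    have := hsmul 0 0 c
    simpa using this
  have hadd' : ∀ a b c, Q a (b + c) = Q a b + Q a c := by
    intro a b c
    rw [hsymm, hadd, hsymm b a, hsymm c a]
  have hsmul' : ∀ (t : ℝ) a c, Q a (t • c) = t * Q a c := by
    intro t a c
    rw [hsymm, hsmul, hsymm c a]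
  by_cases hv0 : v = 0
  · simp [hv0, hzero]
  by_cases hu0 : u = 0
  · rw [hsymm]
    simp [hu0, hzero]
  have hnv : 0 < ‖v‖ := norm_pos_iff.mpr hv0
  have hnu : 0 < ‖u‖ := norm_pos_iff.mpr hu0
  set a : ℝ := Real.sqrt (‖u‖ / ‖v‖) with ha
  have ha0 : 0 < a := Real.sqrt_pos.mpr (by positivity)
  have ha2 : a ^ 2 = ‖u‖ / ‖v‖ := Real.sq_sqrt (by positivity)
  have ha' : a ≠ 0 := ha0.ne'
  set z₁ := a • v + a⁻¹ • u with hz₁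
  set z₂ := a • v + (-a⁻¹) • u with hz₂
  have hz₁S : z₁ ∈ S := S.add_mem (S.smul_mem _ hv) (S.smul_mem _ hu)
  have hz₂S : z₂ ∈ S := S.add_mem (S.smul_mem _ hv) (S.smul_mem _ hu)
  have e1 : Q z₁ z₁ = a^2 * Q v v + 2 * Q v u + a⁻¹^2 * Q u u := by
    rw [hz₁]
    simp only [hadd, hadd', hsmul, hsmul']
    rw [hsymm u v]
    field_simp
    ring
  have e2 : Q z₂ z₂ = a^2 * Q v v - 2 * Q v u + a⁻¹^2 * Q u u := by
    rw [hz₂]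
    simp only [hadd, hadd', hsmul, hsmul']
    rw [hsymm u v]
    field_simp
    ring
  have hpar : ‖z₁‖^2 + ‖z₂‖^2 = 2 * a^2 * ‖v‖^2 + 2 * a⁻¹^2 * ‖u‖^2 := by
    rw [hz₁, hz₂, @norm_add_sq_real, @norm_add_sq_real]
    simp only [real_inner_smul_left, real_inner_smul_right, norm_smul, Real.norm_eq_abs,
      abs_of_pos ha0, abs_neg, abs_of_pos (inv_pos.mpr ha0)]
    ring
  have hb1 := (abs_le.mp (hdiag z₁ hz₁S)).2
  have hb2 := (abs_le.mp (hdiag z₂ hz₂S)).1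
  have key : 4 * Q v u ≤ r * (‖z₁‖^2 + ‖z₂‖^2) := by
    nlinarith [hb1, hb2]
  have ha2' : a⁻¹ ^ 2 = ‖v‖ / ‖u‖ := by
    rw [inv_pow, ha2]
    field_simp
  rw [hpar, ha2, ha2'] at key
  have heq : r * (2 * (‖u‖ / ‖v‖) * ‖v‖ ^ 2 + 2 * (‖v‖ / ‖u‖) * ‖u‖ ^ 2)
      = 4 * (r * ‖v‖ * ‖u‖) := by
    field_simp
    ring
  rw [heq] at key
  linarith

lemma gd_inner_gradient {m : ℕ} (h : EuclideanSpace ℝ (Fin m) → ℝ)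
    (y w : EuclideanSpace ℝ (Fin m)) : ⟪gradient h y, w⟫ = fderiv ℝ h y w := by
  rw [gradient, InnerProductSpace.toDual_symm_apply]

set_option maxHeartbeats 1000000 in
theorem gradient_descent_linear_rate {m n : ℕ}
    (h : EuclideanSpace ℝ (Fin m) → ℝ) (hC2 : ContDiff ℝ 2 h)
    (l L : ℝ) (hl : 0 < l) (hlL : l ≤ L)
    (hHess : ∀ y v : EuclideanSpace ℝ (Fin m),
      l * ‖v‖ ^ 2 ≤ iteratedFDeriv ℝ 2 h y ![v, v] ∧
      iteratedFDeriv ℝ 2 h y ![v, v] ≤ L * ‖v‖ ^ 2)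
    (A : Matrix (Fin m) (Fin n) ℝ) (b : EuclideanSpace ℝ (Fin m))
    (t : ℝ) (ht : t = (L * sigmaMax A ^ 2 + l * sigmaMinPos A ^ 2) / 2)
    (x : ℕ → EuclideanSpace ℝ (Fin n))
    (hiter : ∀ k, x (k + 1) =
      x k - (1 / t) • Matrix.toEuclideanLin Aᵀ
        (gradient h (Matrix.toEuclideanLin A (x k) + b)))
    (xs : EuclideanSpace ℝ (Fin n))
    (hmin : ∀ y, h (Matrix.toEuclideanLin A xs + b) ≤ h (Matrix.toEuclideanLin A y + b))
    (hker : ∀ k, x k - xs ∈ (LinearMap.ker (Matrix.toEuclideanLin A))ᗮ)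
    (φ : ℝ) (hφ : φ = (sigmaMax A / sigmaMinPos A) ^ 2 * (L / l)) :
    ∀ k, ‖x (k + 1) - xs‖ ≤ (φ - 1) / (φ + 1) * ‖x k - xs‖ := by
  intro k
  by_cases hK : LinearMap.ker (Matrix.toEuclideanLin A) = ⊤
  · -- degenerate case : all iterates equal xs
    have hx : ∀ j, x j - xs = 0 := by
      intro j
      have hj := hker j
      rw [hK, Submodule.top_orthogonal_eq_bot] at hj
      simpa using hj
    rw [hx (k+1), hx k]
    simp
  · -- main case
    have hex : ∃ j, (Matrix.isHermitian_conjTranspose_mul_self A).eigenvalues j ≠ 0 := by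
      by_contra hno
      push_neg at hno
      apply hK
      rw [LinearMap.ker_eq_top]
      ext v
      have hz : ‖Matrix.toEuclideanLin A v‖ ^ 2 = 0 := by
        rw [gd_norm_expand A v]
        simp only [hno, zero_mul, Finset.sum_const_zero]
      have : Matrix.toEuclideanLin A v = 0 :=
        norm_eq_zero.mp (pow_eq_zero_iff two_ne_zero |>.mp hz)
      simp [this]
    obtain ⟨hσm_pos, hσmm, hupper, hlower⟩ := gd_spectral_facts A hex
    set σM := sigmaMax A with hσM
    set σm := sigmaMinPos A with hσm
    set μ := l * σm ^ 2 with hμdef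
    set Lg := L * σM ^ 2 with hLgdef
    have hμ : 0 < μ := by rw [hμdef]; positivity
    have hσM_pos : 0 < σM := lt_of_lt_of_le hσm_pos hσmm
    have hμLg : μ ≤ Lg := by
      rw [hμdef, hLgdef]
      exact mul_le_mul hlL (pow_le_pow_left₀ hσm_pos.le hσmm 2) (by positivity) (hl.trans_le hlL).le
    have hLgpos : 0 < Lg := lt_of_lt_of_le hμ hμLg
    have ht2 : 2 * t = Lg + μ := by rw [ht]; ring
    have htpos : 0 < t := by linarith
    set r := (Lg - μ) / (Lg + μ) with hrdef
    have hr0 : 0 ≤ r := div_nonneg (by linarith) (by linarith)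
    have hrate : (φ - 1) / (φ + 1) = r := by
      have hφ' : φ = Lg / μ := by
        rw [hφ, hμdef, hLgdef, div_pow]
        field_simp
      have hd1 : Lg / μ + 1 ≠ 0 := by positivity
      have hd2 : Lg + μ ≠ 0 := by linarith
      rw [hφ', hrdef, div_eq_div_iff hd1 hd2]
      field_simp
      try ring
    rw [hrate]
    -- notation
    set T := Matrix.toEuclideanLin A with hTdef
    set v := x k - xs with hv
    set u := x (k + 1) - xs with hu
    have hvS : v ∈ (LinearMap.ker T)ᗮ := hker k
    have huS : u ∈ (LinearMap.ker T)ᗮ := hker (k + 1)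
    set f' := fderiv ℝ h with hf'
    have hdiffh : Differentiable ℝ h := hC2.differentiable (by norm_num)
    have hf'c : ContDiff ℝ 1 f' := hC2.fderiv_right (by norm_num : (1:WithTop ℕ∞) + 1 ≤ 2)
    set c : EuclideanSpace ℝ (Fin m) := T xs + b with hc
    set w : EuclideanSpace ℝ (Fin m) := T v with hw
    -- the scalar function along the segment
    set q : ℝ → ℝ := fun s => s * ⟪v, u⟫ - (1/t) * (f' (c + s • w) (T u)) with hq
    have hq' : ∀ s : ℝ, HasDerivAt q
        (⟪v, u⟫ - (1/t) * (fderiv ℝ f' (c + s • w) w (T u))) s := by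
      intro s
      have hA : HasDerivAt (fun s : ℝ => s * ⟪v, u⟫) ⟪v, u⟫ s := by
        simpa using (hasDerivAt_id s).mul_const ⟪v, u⟫
      have h1 : HasDerivAt (fun s : ℝ => c + s • w) w s := by
        simpa using ((hasDerivAt_id s).smul_const w).const_add c
      have h2 : HasFDerivAt f' (fderiv ℝ f' (c + s • w)) (c + s • w) :=
        ((hf'c.differentiable one_ne_zero) _).hasFDerivAt
      have h3 : HasDerivAt (fun s : ℝ => f' (c + s • w))
          (fderiv ℝ f' (c + s • w) w) s := h2.comp_hasDerivAt s h1
      have h4 : HasDerivAt (fun s : ℝ => f' (c + s • w) (T u))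
          (fderiv ℝ f' (c + s • w) w (T u)) s :=
        h3.clm_apply (hasDerivAt_const _ _) |>.congr_deriv (by simp)
      exact hA.sub (h4.const_mul (1/t))
    -- bound on the derivative
    have hQb : ∀ s : ℝ,
        |⟪v, u⟫ - (1/t) * (fderiv ℝ f' (c + s • w) w (T u))| ≤ r * ‖v‖ * ‖u‖ := by
      intro s
      set y := c + s • w with hy
      set B := fderiv ℝ f' y with hB
      have hsymmB : ∀ p q' : EuclideanSpace ℝ (Fin m), B p q' = B q' p := fun p q' =>
        second_derivative_symmetric (fun z => (hdiffh z).hasFDerivAt)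
          ((hf'c.differentiable one_ne_zero y).hasFDerivAt) p q'
      set Q : EuclideanSpace ℝ (Fin n) → EuclideanSpace ℝ (Fin n) → ℝ :=
        fun p q' => ⟪p, q'⟫ - (1/t) * (B (T p) (T q')) with hQdef
      have hQadd : ∀ a b' c', Q (a + b') c' = Q a c' + Q b' c' := by
        intro a b' c'
        simp only [hQdef, LinearMap.map_add, ContinuousLinearMap.map_add, inner_add_left,
          ContinuousLinearMap.add_apply]
        ring
      have hQsmul : ∀ (t' : ℝ) a c', Q (t' • a) c' = t' * Q a c' := by
        intro t' a c'
        simp only [hQdef, LinearMap.map_smul, real_inner_smul_left,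
          ContinuousLinearMap.map_smul, ContinuousLinearMap.coe_smul', Pi.smul_apply,
          smul_eq_mul]
        ring
      have hQsymm : ∀ a b', Q a b' = Q b' a := by
        intro a b'
        simp only [hQdef]
        rw [real_inner_comm, hsymmB]
      have hQdiag : ∀ z ∈ (LinearMap.ker T)ᗮ, |Q z z| ≤ r * ‖z‖ ^ 2 := by
        intro z hz
        have hBz : B (T z) (T z) = iteratedFDeriv ℝ 2 h y ![T z, T z] := by
          rw [iteratedFDeriv_two_apply]
          simp [hB, hf']
        have h1 := (hHess y (T z)).1
        have h2 := (hHess y (T z)).2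
        have hlow : μ * ‖z‖ ^ 2 ≤ B (T z) (T z) := by
          rw [hBz]
          calc μ * ‖z‖ ^ 2 = l * (σm ^ 2 * ‖z‖ ^ 2) := by rw [hμdef]; ring
          _ ≤ l * ‖T z‖ ^ 2 := mul_le_mul_of_nonneg_left (hlower z hz) hl.le
          _ ≤ _ := h1
        have hup : B (T z) (T z) ≤ Lg * ‖z‖ ^ 2 := by
          rw [hBz]
          calc iteratedFDeriv ℝ 2 h y ![T z, T z] ≤ L * ‖T z‖ ^ 2 := h2
          _ ≤ L * (σM ^ 2 * ‖z‖ ^ 2) :=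
            mul_le_mul_of_nonneg_left (hupper z) (lt_of_lt_of_le hl hlL).le
          _ = Lg * ‖z‖ ^ 2 := by rw [hLgdef]; ring
        have hLμ : Lg + μ ≠ 0 := by linarith
        have e3 : (1:ℝ) - μ / t = r := by
          rw [hrdef]
          field_simp
          first
          | linear_combination μ * ht2
          | linear_combination (-μ) * ht2
          | nlinarith [ht2]
        have e4 : (1:ℝ) - Lg / t = -r := by
          rw [hrdef]
          field_simp
          first
          | linear_combination Lg * ht2
          | linear_combination (-Lg) * ht2
          | nlinarith [ht2]
        have hzn : (0:ℝ) ≤ ‖z‖ ^ 2 := sq_nonneg _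
        have hQzz : Q z z = ‖z‖ ^ 2 - (1/t) * (B (T z) (T z)) := by
          simp only [hQdef, real_inner_self_eq_norm_sq]
        rw [hQzz, abs_le]
        constructor
        · have hup' : (1/t) * (B (T z) (T z)) ≤ (1/t) * (Lg * ‖z‖ ^ 2) :=
            mul_le_mul_of_nonneg_left hup (by positivity)
          have he : -(r * ‖z‖ ^ 2) = ‖z‖ ^ 2 - (1/t) * (Lg * ‖z‖ ^ 2) := by
            have h5 : (1:ℝ) - Lg * (1/t) = -r := by
              rw [← e4]; ring
            linear_combination (-(‖z‖ ^ 2)) * h5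
          linarith
        · have hlow' : (1/t) * (μ * ‖z‖ ^ 2) ≤ (1/t) * (B (T z) (T z)) :=
            mul_le_mul_of_nonneg_left hlow (by positivity)
          have he : r * ‖z‖ ^ 2 = ‖z‖ ^ 2 - (1/t) * (μ * ‖z‖ ^ 2) := by
            have h5 : (1:ℝ) - μ * (1/t) = r := by
              rw [← e3]; ring
            linear_combination (-(‖z‖ ^ 2)) * h5
          linarith
      have hQvu : Q v u = ⟪v, u⟫ - (1/t) * (fderiv ℝ f' (c + s • w) w (T u)) := by
        simp only [hQdef, hB, hy, hw]
      rw [← hQvu, abs_le]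
      constructor
      · have hneg := gd_bilin_bound _ Q r hQadd hQsmul hQsymm hQdiag v (-u) hvS
          (Submodule.neg_mem _ huS)
        have hQn : Q v (-u) = -Q v u := by
          have : (-u : EuclideanSpace ℝ (Fin n)) = (-1 : ℝ) • u := by simp
          rw [hQsymm v (-u), this, hQsmul, hQsymm u v]
          ring
        rw [hQn, norm_neg] at hneg
        linarith
      · exact gd_bilin_bound _ Q r hQadd hQsmul hQsymm hQdiag v u hvS huS
    -- endpoints of q
    have hTcont : HasFDerivAt (fun z : EuclideanSpace ℝ (Fin n) => T z + b)
        (LinearMap.toContinuousLinearMap T) xs :=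
      (LinearMap.toContinuousLinearMap T).hasFDerivAt.add_const b
    have hg : HasFDerivAt (fun z : EuclideanSpace ℝ (Fin n) => h (T z + b))
        ((f' c).comp (LinearMap.toContinuousLinearMap T)) xs :=
      HasFDerivAt.comp xs (hdiffh c).hasFDerivAt hTcont
    have hgzero : (f' c).comp (LinearMap.toContinuousLinearMap T) = 0 :=
      IsLocalMin.hasFDerivAt_eq_zero
        ((isMinOn_univ_iff.mpr hmin).isLocalMin Filter.univ_mem) hg
    have hfc0 : f' c (T u) = 0 := by
      have := congrFun (congrArg DFunLike.coe hgzero) u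
      simpa using this
    have hq0 : q 0 = 0 := by
      simp only [hq, zero_mul, zero_smul, add_zero, zero_sub, neg_eq_zero]
      rw [hfc0]
      ring
    have hq1 : q 1 = ⟪u, u⟫ := by
      have hc1 : c + (1:ℝ) • w = T (x k) + b := by
        rw [one_smul, hc, hw, hv, add_right_comm, ← LinearMap.map_add, add_sub_cancel]
      simp only [hq, one_mul, hc1]
      -- ⟪v,u⟫ - (1/t) * f' (T (x k) + b) (T u) = ⟪u, u⟫
      have hFinner : f' (T (x k) + b) (T u)
          = ⟪Matrix.toEuclideanLin Aᵀ (gradient h (T (x k) + b)), u⟫ := by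
        rw [gd_transpose_eq_adj, LinearMap.adjoint_inner_left, gd_inner_gradient, hf']
      rw [hFinner]
      have hxk1 : u = v - (1/t) • Matrix.toEuclideanLin Aᵀ (gradient h (T (x k) + b)) := by
        rw [hu, hv, hiter k, hTdef]
        abel
      nth_rw 3 [hxk1]
      simp only [inner_sub_left, real_inner_smul_left]
    -- mean value theorem on [0,1] (use univ)
    have hmvt : ‖q 1 - q 0‖ ≤ (r * ‖v‖ * ‖u‖) * ‖(1:ℝ) - 0‖ := by
      apply Convex.norm_image_sub_le_of_norm_hasDerivWithin_le
        (f' := fun s => ⟪v, u⟫ - (1/t) * (fderiv ℝ f' (c + s • w) w (T u)))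
        (fun s _ => (hq' s).hasDerivWithinAt)
        (fun s _ => by rw [Real.norm_eq_abs]; exact hQb s)
        convex_univ (Set.mem_univ 0) (Set.mem_univ 1)
    rw [hq1, hq0, sub_zero] at hmvt
    have huu : ‖u‖ ^ 2 ≤ r * ‖v‖ * ‖u‖ := by
      calc ‖u‖ ^ 2 = ⟪u, u⟫ := (real_inner_self_eq_norm_sq u).symm
      _ ≤ ‖⟪u, u⟫‖ := le_abs_self _
      _ ≤ (r * ‖v‖ * ‖u‖) * ‖(1:ℝ) - 0‖ := hmvt
      _ = r * ‖v‖ * ‖u‖ := by norm_num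
    by_cases hu0 : ‖u‖ = 0
    · rw [hu0]
      positivity
    · have hupos : 0 < ‖u‖ := lt_of_le_of_ne (norm_nonneg u) (Ne.symm hu0)
      have h2 : ‖u‖ * ‖u‖ ≤ (r * ‖v‖) * ‖u‖ := by nlinarith [huu]
      exact le_of_mul_le_mul_right h2 hupos
end

section
/- Let K_l ∈ ℝ^{|E_l|×|V|} have full row rank, T_l = K_l K_lᵀ, and let P_{A,l} and P_{I,l} = I_l - P_{A,l} be complementary coordinate projections on ℝ^{E_l}. Then the matrix Π_{I,l} := K_lᵀ T_l^{-1/2} (I_l - (T_l^{-1/2}P_{A,l})(T_l^{-1/2}P_{A,l})†) T_l^{-1/2} K_l is an orthogonal projection (symmetric and idempotent) on ℝ^{|V|}. -/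
open Matrix

/-- `X` is the Moore–Penrose pseudoinverse of `A`. -/
def IsMoorePenrose {a b : Type*} [Fintype a] [Fintype b]
    (A : Matrix a b ℝ) (X : Matrix b a ℝ) : Prop :=
  A * X * A = A ∧ X * A * X = X ∧ (A * X)ᵀ = A * X ∧ (X * A)ᵀ = X * A

theorem blockwise_matrix_is_orthogonal_projection
    {El V : Type*} [Fintype El] [DecidableEq El] [Fintype V] [DecidableEq V]
    (Kl : Matrix El V ℝ) (hrank : Kl.rank = Fintype.card El)
    (Tl : Matrix El El ℝ) (hTl : Tl = Kl * Klᵀ)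
    (Aset : Set El) [DecidablePred (· ∈ Aset)]
    (PAl : Matrix El El ℝ) (hPAl : PAl = Matrix.diagonal (fun e => if e ∈ Aset then (1 : ℝ) else 0))
    -- `S⁻¹` plays the role of `T_l^{-1/2}`:
    (S : Matrix El El ℝ) (hS : S.PosDef) (hSsq : S * S = Tl)
    (D : Matrix El El ℝ) (hD : IsMoorePenrose (S⁻¹ * PAl) D)
    (Pr : Matrix V V ℝ)
    (hPr : Pr = Klᵀ * S⁻¹ * ((1 : Matrix El El ℝ) - (S⁻¹ * PAl) * D) * S⁻¹ * Kl) :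
    Prᵀ = Pr ∧ Pr * Pr = Pr := by
  have hSu : IsUnit S.det := isUnit_iff_ne_zero.mpr (ne_of_gt hS.det_pos)
  have hSsym : Sᵀ = S := by
    have := hS.isHermitian.eq
    simpa using this
  have hSinvsym : (S⁻¹)ᵀ = S⁻¹ := by rw [Matrix.transpose_nonsing_inv, hSsym]
  set A := S⁻¹ * PAl with hA
  set Q := (1 : Matrix El El ℝ) - A * D with hQ
  have hQsym : Qᵀ = Q := by
    simp [hQ, Matrix.transpose_sub, hD.2.2.1]
  have hQQ : Q * Q = Q := by
    have h1 : (A * D) * (A * D) = A * D := by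
      calc (A*D)*(A*D) = (A*D*A)*D := by noncomm_ring
      _ = A*D := by rw [hD.1]
    simp only [hQ, Matrix.sub_mul, Matrix.mul_sub, Matrix.one_mul, Matrix.mul_one, h1]
    abel
  constructor
  · rw [hPr]
    simp only [Matrix.transpose_mul, Matrix.transpose_transpose, hSinvsym, hQsym]
    simp only [Matrix.mul_assoc]
  · rw [hPr]
    simp only [Matrix.mul_assoc]
    rw [← Matrix.mul_assoc Kl Klᵀ, ← hTl, ← hSsq, Matrix.mul_assoc S S,
      Matrix.nonsing_inv_mul_cancel_left _ _ hSu,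
      Matrix.mul_nonsing_inv_cancel_left _ _ hSu,
      ← Matrix.mul_assoc Q Q, hQQ]
end

section
/- In the setting above, the orthogonal projection Π_{I,l} = K_lᵀ T_l^{-1/2}(I_l - (T_l^{-1/2}P_{A,l})(T_l^{-1/2}P_{A,l})†)T_l^{-1/2}K_l has range equal to span{K_lᵀ e : e ∈ I ∩ E_l}, i.e., the span of the rows of K_l indexed by the inactive edges. In particular Π_{I,l} K_lᵀ P_{I,l} = K_lᵀ P_{I,l} and rank Π_{I,l} = |I ∩ E_l|. -/
open Matrix

theorem blockwise_projection_range
    {El V : Type*} [Fintype El] [DecidableEq El] [Fintype V] [DecidableEq V]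
    (Kl : Matrix El V ℝ) (hrank : Kl.rank = Fintype.card El)
    (Tl : Matrix El El ℝ) (hTl : Tl = Kl * Klᵀ)
    (Aset Iset : Set El) [DecidablePred (· ∈ Aset)] [DecidablePred (· ∈ Iset)]
    (hAI : Iset = Asetᶜ)
    (PAl : Matrix El El ℝ) (hPAl : PAl = Matrix.diagonal (fun e => if e ∈ Aset then (1 : ℝ) else 0))
    (PIl : Matrix El El ℝ) (hPIl : PIl = (1 : Matrix El El ℝ) - PAl)
    -- `S⁻¹` plays the role of `T_l^{-1/2}`:
    (S : Matrix El El ℝ) (hS : S.PosDef) (hSsq : S * S = Tl)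
    (D : Matrix El El ℝ) (hD : IsMoorePenrose (S⁻¹ * PAl) D)
    (Pr : Matrix V V ℝ)
    (hPr : Pr = Klᵀ * S⁻¹ * ((1 : Matrix El El ℝ) - (S⁻¹ * PAl) * D) * S⁻¹ * Kl) :
    LinearMap.range Pr.mulVecLin = Submodule.span ℝ ((fun e => Kl e) '' Iset) ∧
    Pr * (Klᵀ * PIl) = Klᵀ * PIl ∧
    Pr.rank = Fintype.card {e : El // e ∈ Iset} := by
  obtain ⟨h1, h2, h3, h4⟩ := hD
  set Q : Matrix El El ℝ := (1 : Matrix El El ℝ) - (S⁻¹ * PAl) * D with hQ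
  -- basic facts about S
  have hSdet : IsUnit S.det := isUnit_iff_ne_zero.2 hS.det_pos.ne'
  have hSi : S * S⁻¹ = 1 := Matrix.mul_nonsing_inv S hSdet
  have hiS : S⁻¹ * S = 1 := Matrix.nonsing_inv_mul S hSdet
  have hSsymm : Sᵀ = S := hS.isHermitian.eq
  have hSinvsymm : (S⁻¹)ᵀ = S⁻¹ := by rw [transpose_nonsing_inv, hSsymm]
  -- basic facts about the diagonal projections
  have hPAsq : PAl * PAl = PAl := by
    rw [hPAl, diagonal_mul_diagonal]
    exact congrArg Matrix.diagonal
      (by funext e; by_cases h : e ∈ Aset <;> simp [h])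
  have hPAPI : PAl * PIl = 0 := by rw [hPIl, mul_sub, mul_one, hPAsq, sub_self]
  have hPAT : PAlᵀ = PAl := by rw [hPAl, diagonal_transpose]
  have hPIT : PIlᵀ = PIl := by rw [hPIl, transpose_sub, transpose_one, hPAT]
  have hsum : PAl + PIl = 1 := by rw [hPIl]; abel
  -- symmetry and annihilation identities
  have hQsymm : Qᵀ = Q := by rw [hQ, transpose_sub, transpose_one, h3]
  have hQM : Q * (S⁻¹ * PAl) = 0 := by rw [hQ, sub_mul, one_mul, h1, sub_self]
  have hMDsymm : (S⁻¹ * PAl) * D = Dᵀ * (PAl * S⁻¹) := by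
    rw [← h3, transpose_mul, transpose_mul, hPAT, hSinvsymm]
  have hx : Dᵀ * (PAl * S⁻¹) * (S * PIl) = 0 := by
    rw [mul_assoc, mul_assoc, ← mul_assoc S⁻¹ S PIl, hiS, one_mul, hPAPI, mul_zero]
  have hQSPI : Q * (S * PIl) = S * PIl := by
    rw [hQ, sub_mul, one_mul, hMDsymm, hx, sub_zero]
  have hPAQ : PAl * (S⁻¹ * Q) = 0 := by
    have := congrArg Matrix.transpose hQM
    rwa [transpose_mul, transpose_mul, hQsymm, hPAT, hSinvsymm, transpose_zero,
      mul_assoc] at this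
  -- key factorization 2 : Pr * (Klᵀ * PIl) = Klᵀ * PIl
  have hKK : Kl * Klᵀ = S * S := by rw [hSsq, hTl]
  have e1 : Kl * (Klᵀ * PIl) = S * (S * PIl) := by
    rw [← Matrix.mul_assoc Kl Klᵀ PIl, hKK, Matrix.mul_assoc]
  have hfact2 : Pr * (Klᵀ * PIl) = Klᵀ * PIl := by
    rw [hPr]
    simp only [Matrix.mul_assoc]
    rw [e1, ← Matrix.mul_assoc S⁻¹ S (S * PIl), hiS, one_mul, hQSPI,
      ← Matrix.mul_assoc S⁻¹ S PIl, hiS, one_mul]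
  -- key factorization 1 : Pr = (Klᵀ * PIl) * W
  have hIQ : S⁻¹ * Q = PIl * (S⁻¹ * Q) := by
    calc S⁻¹ * Q = (PAl + PIl) * (S⁻¹ * Q) := by rw [hsum, one_mul]
      _ = PAl * (S⁻¹ * Q) + PIl * (S⁻¹ * Q) := by rw [add_mul]
      _ = PIl * (S⁻¹ * Q) := by rw [hPAQ, zero_add]
  have hfact1 : Pr = (Klᵀ * PIl) * (S⁻¹ * (Q * (S⁻¹ * Kl))) := by
    rw [hPr]
    simp only [Matrix.mul_assoc]
    conv_lhs => rw [← Matrix.mul_assoc S⁻¹ Q (S⁻¹ * Kl), hIQ,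
      Matrix.mul_assoc, Matrix.mul_assoc]
  -- range of Pr equals range of Klᵀ * PIl
  have hrangeeq : LinearMap.range Pr.mulVecLin
      = LinearMap.range (Klᵀ * PIl).mulVecLin := by
    apply le_antisymm
    · rw [hfact1, mulVecLin_mul]
      exact LinearMap.range_comp_le_range _ _
    · conv_lhs => rw [← hfact2]
      rw [mulVecLin_mul]
      exact LinearMap.range_comp_le_range _ _
  -- the range of Klᵀ * PIl is the span of the inactive rows
  have hspan : LinearMap.range (Klᵀ * PIl).mulVecLin
      = Submodule.span ℝ ((fun e => Kl e) '' Iset) := by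
    rw [range_mulVecLin]
    change Submodule.span ℝ (Set.range (Klᵀ * PIl)ᵀ) = _
    rw [transpose_mul, transpose_transpose, hPIT]
    have hrow : ∀ e : El, (PIl * Kl) e = if e ∈ Iset then Kl e else 0 := by
      intro e
      have : (PIl * Kl) e = fun v => ∑ f, PIl e f * Kl f v := by
        funext v; rfl
      rw [this]
      funext v
      rw [hPIl, hPAl]
      simp only [Matrix.sub_apply, Matrix.one_apply, Matrix.diagonal_apply]
      rw [Finset.sum_eq_single e]
      · by_cases h : e ∈ Iset
        · have : e ∉ Aset := by rw [hAI] at h; exact h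
          simp [h, this]
        · have : e ∈ Aset := by rw [hAI] at h; simpa using h
          simp [h, this]
      · intro f _ hf; simp [Ne.symm hf, hf]
      · intro h; exact absurd (Finset.mem_univ e) h
    apply le_antisymm
    · rw [Submodule.span_le]
      rintro x ⟨e, rfl⟩
      rw [hrow e]
      by_cases h : e ∈ Iset
      · simp only [h, if_true]
        exact Submodule.subset_span ⟨e, h, rfl⟩
      · simp only [h, if_false]
        exact Submodule.zero_mem _
    · rw [Submodule.span_le]
      rintro x ⟨e, he, rfl⟩
      refine Submodule.subset_span ⟨e, ?_⟩
      rw [hrow e, if_pos he]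
  -- linear independence of the rows of Kl
  have hTlinv : (S⁻¹ * S⁻¹) * (Kl * Klᵀ) = 1 := by
    rw [hKK, mul_assoc, ← mul_assoc S⁻¹ S S, hiS, one_mul, hiS]
  have hli : LinearIndependent ℝ (fun e : El => Kl e) := by
    rw [Fintype.linearIndependent_iff]
    intro g hg i
    have hKv : Klᵀ *ᵥ g = 0 := by
      funext v
      have := congrFun hg v
      simpa [Matrix.mulVec, dotProduct, Finset.sum_apply, mul_comm] using this
    have : ((S⁻¹ * S⁻¹) * (Kl * Klᵀ)) *ᵥ g = 0 := by
      rw [← Matrix.mulVec_mulVec, ← Matrix.mulVec_mulVec, ← Matrix.mulVec_mulVec, hKv]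
      simp
    rw [hTlinv] at this
    simpa using congrFun this i
  have hli' : LinearIndependent ℝ (fun e : {e : El // e ∈ Iset} => Kl e) :=
    hli.comp Subtype.val Subtype.val_injective
  have hrankPr : Pr.rank = Fintype.card {e : El // e ∈ Iset} := by
    have : Pr.rank = Module.finrank ℝ (LinearMap.range Pr.mulVecLin) := rfl
    rw [this, hrangeeq, hspan, Set.image_eq_range (fun e => Kl e) Iset,
      finrank_span_eq_card hli']
  exact ⟨hrangeeq.trans hspan, hfact2, hrankPr⟩
end

section
/- Let Π₁,…,Π_L be orthogonal projections on a finite-dimensional real inner product space onto subspaces S₁,…,S_L with S₁ = ⋯ = S_{l̂} ⊋ S_{l̂+1} ⊇ ⋯ ⊇ S_L ⊋ {0}. Then the sum Π = Σ_{l=1}^L Π_l satisfies λ_max(Π) = L and the smallest nonzero eigenvalue of Π equals l̂. -/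
open RealInnerProductSpace

/-- `P` is the orthogonal projection onto the subspace `S`. -/
def IsOrthoProjOnto {F : Type*} [NormedAddCommGroup F] [InnerProductSpace ℝ F]
    (P : F →ₗ[ℝ] F) (S : Submodule ℝ F) : Prop :=
  ∀ v : F, P v ∈ S ∧ v - P v ∈ Sᗮ

section helpers
variable {F : Type*} [NormedAddCommGroup F] [InnerProductSpace ℝ F]
  {P Q : F →ₗ[ℝ] F} {S : Submodule ℝ F}

lemma op_inner (hP : IsOrthoProjOnto P S) (v : F) : ⟪P v, v⟫ = ‖P v‖ ^ 2 := by
  have h0 : ⟪P v, v - P v⟫ = (0:ℝ) :=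
    (Submodule.mem_orthogonal S (v - P v)).mp (hP v).2 (P v) (hP v).1
  have h := inner_sub_right (𝕜 := ℝ) (P v) v (P v)
  rw [h0] at h
  have h1 : ⟪P v, v⟫ = ⟪P v, P v⟫ := by linarith
  rw [h1, real_inner_self_eq_norm_sq]

lemma op_mem (hP : IsOrthoProjOnto P S) {v : F} (hv : v ∈ S) : P v = v := by
  have hmem : v - P v ∈ S := sub_mem hv (hP v).1
  have h0 : ⟪v - P v, v - P v⟫ = (0:ℝ) :=
    (Submodule.mem_orthogonal S (v - P v)).mp (hP v).2 _ hmem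
  have h := inner_self_eq_zero (𝕜 := ℝ) (x := v - P v) |>.mp h0
  have := sub_eq_zero.mp h
  exact this.symm

lemma op_orth (hP : IsOrthoProjOnto P S) {v : F} (hv : v ∈ Sᗮ) : P v = 0 := by
  have hmem : P v ∈ Sᗮ := by
    have : P v = v - (v - P v) := by abel
    rw [this]
    exact sub_mem hv (hP v).2
  have h0 : ⟪P v, P v⟫ = (0:ℝ) :=
    (Submodule.mem_orthogonal S (P v)).mp hmem _ (hP v).1
  exact inner_self_eq_zero (𝕜 := ℝ) |>.mp h0

lemma op_unique (hP : IsOrthoProjOnto P S) (hQ : IsOrthoProjOnto Q S) (v : F) :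
    P v = Q v := by
  have hmem : P v - Q v ∈ S := sub_mem (hP v).1 (hQ v).1
  have hmem' : P v - Q v ∈ Sᗮ := by
    have : P v - Q v = (v - Q v) - (v - P v) := by abel
    rw [this]
    exact sub_mem (hQ v).2 (hP v).2
  have h0 : ⟪P v - Q v, P v - Q v⟫ = (0:ℝ) :=
    (Submodule.mem_orthogonal S (P v - Q v)).mp hmem' _ hmem
  exact sub_eq_zero.mp (inner_self_eq_zero (𝕜 := ℝ) |>.mp h0)

lemma op_norm_sq_le (hP : IsOrthoProjOnto P S) (v : F) : ‖P v‖ ^ 2 ≤ ‖v‖ ^ 2 := by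
  have h0 : ⟪P v, v - P v⟫ = (0:ℝ) :=
    (Submodule.mem_orthogonal S (v - P v)).mp (hP v).2 (P v) (hP v).1
  have h : ‖P v + (v - P v)‖ ^ 2 = ‖P v‖ ^ 2 + 2 * ⟪P v, v - P v⟫ + ‖v - P v‖ ^ 2 :=
    norm_add_sq_real _ _
  rw [h0] at h
  have hv : P v + (v - P v) = v := by abel
  rw [hv] at h
  nlinarith [sq_nonneg ‖v - P v‖]

end helpers

lemma ite_sum_eq (L lhat : ℕ) (h2 : lhat ≤ L) (x : ℝ) :
    ∑ l : Fin L, (if (l : ℕ) < lhat then x else 0) = (lhat : ℝ) * x := by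
  rw [Fin.sum_univ_eq_sum_range (fun i => if i < lhat then x else 0) L,
    ← Finset.sum_filter]
  have hf : (Finset.range L).filter (fun i => i < lhat) = Finset.range lhat := by
    ext i; simp; omega
  rw [hf, Finset.sum_const, Finset.card_range, nsmul_eq_mul]

theorem sum_of_nested_projections_eigenvalues
    {F : Type*} [NormedAddCommGroup F] [InnerProductSpace ℝ F] [FiniteDimensional ℝ F]
    (L : ℕ) (hL : 0 < L) (lhat : ℕ) (h1 : 1 ≤ lhat) (h2 : lhat ≤ L)
    (S : Fin L → Submodule ℝ F)
    (P : Fin L → (F →ₗ[ℝ] F)) (hP : ∀ l, IsOrthoProjOnto (P l) (S l))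
    (hmono : ∀ i j : Fin L, i ≤ j → S j ≤ S i)
    (heq : ∀ i : Fin L, (i : ℕ) < lhat → S i = S ⟨0, hL⟩)
    (hstrict : ∀ i : Fin L, (i : ℕ) = lhat → S i < S ⟨0, hL⟩)
    (hbot : S ⟨L - 1, by omega⟩ ≠ ⊥) :
    (Module.End.HasEigenvalue (∑ l, P l) ((L : ℝ)) ∧
      ∀ μ : ℝ, Module.End.HasEigenvalue (∑ l, P l) μ → μ ≤ (L : ℝ)) ∧
    (Module.End.HasEigenvalue (∑ l, P l) ((lhat : ℝ)) ∧
      ∀ μ : ℝ, Module.End.HasEigenvalue (∑ l, P l) μ → μ ≠ 0 → (lhat : ℝ) ≤ μ) := by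
  -- basic facts
  have apply_sum : ∀ v : F, (∑ l, P l) v = ∑ l, P l v := fun v => by
    simp [LinearMap.sum_apply]
  -- key identity for any eigenpair
  have key : ∀ (μ : ℝ) (v : F), (∑ l, P l) v = μ • v →
      μ * ‖v‖ ^ 2 = ∑ l, ‖P l v‖ ^ 2 := by
    intro μ v hv
    have h1' : ⟪(∑ l, P l) v, v⟫ = μ * ‖v‖ ^ 2 := by
      rw [hv, real_inner_smul_left, real_inner_self_eq_norm_sq]
    have h2' : ⟪(∑ l, P l) v, v⟫ = ∑ l, ‖P l v‖ ^ 2 := by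
      rw [apply_sum, sum_inner]
      exact Finset.sum_congr rfl fun l _ => op_inner (hP l) v
    rw [← h1', h2']
  -- a nonzero vector in the smallest subspace
  obtain ⟨v₀, hv₀S, hv₀⟩ := Submodule.exists_mem_ne_zero_of_ne_bot hbot
  have hv₀all : ∀ l : Fin L, v₀ ∈ S l := fun l => by
    refine hmono l ⟨L - 1, by omega⟩ ?_ hv₀S
    simpa [Fin.le_def] using by omega
  -- eigenvector for L
  have hevL : (∑ l, P l) v₀ = (L : ℝ) • v₀ := by
    rw [apply_sum]
    have : ∀ l : Fin L, P l v₀ = v₀ := fun l => op_mem (hP l) (hv₀all l)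
    simp only [this, Finset.sum_const, Finset.card_univ, Fintype.card_fin]
    rw [← Nat.cast_smul_eq_nsmul ℝ]
  -- upper bound
  have upper : ∀ μ : ℝ, Module.End.HasEigenvalue (∑ l, P l) μ → μ ≤ (L : ℝ) := by
    intro μ hμ
    obtain ⟨v, hv, hvne⟩ := hμ.exists_hasEigenvector
    have hv' : (∑ l, P l) v = μ • v := Module.End.mem_eigenspace_iff.mp hv
    have hk := key μ v hv'
    have hbd : ∑ l : Fin L, ‖P l v‖ ^ 2 ≤ ∑ l : Fin L, ‖v‖ ^ 2 :=
      Finset.sum_le_sum fun l _ => op_norm_sq_le (hP l) v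
    rw [Finset.sum_const, Finset.card_univ, Fintype.card_fin, nsmul_eq_mul] at hbd
    have hpos : 0 < ‖v‖ ^ 2 := pow_pos (norm_pos_iff.mpr hvne) 2
    nlinarith
  -- eigenvector for lhat : construct w in S 0 orthogonal to S lhat (when lhat < L)
  have hev_lhat : Module.End.HasEigenvalue (∑ l, P l) ((lhat : ℝ)) := by
    rcases eq_or_lt_of_le h2 with rfl | hlt
    · exact Module.End.hasEigenvalue_of_hasEigenvector ⟨Module.End.mem_eigenspace_iff.mpr hevL, hv₀⟩
    · set i : Fin L := ⟨lhat, hlt⟩ with hi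
      have hSi : S i < S ⟨0, hL⟩ := hstrict i rfl
      obtain ⟨w, hwS0, hwSi⟩ := SetLike.exists_of_lt hSi
      set v : F := w - P i w with hv
      have hvne : v ≠ 0 := by
        intro h
        exact hwSi (by
          have : w = P i w := by rwa [sub_eq_zero] at h
          rw [this]; exact (hP i w).1)
      have hvorth : v ∈ (S i)ᗮ := (hP i w).2
      have hvS0 : v ∈ S ⟨0, hL⟩ := by
        refine sub_mem hwS0 (hmono ⟨0, hL⟩ i (by simp [Fin.le_def]) (hP i w).1)
      have hsum : (∑ l, P l) v = (lhat : ℝ) • v := by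
        rw [apply_sum]
        have hterm : ∀ l : Fin L, P l v = if (l : ℕ) < lhat then v else 0 := by
          intro l
          by_cases hl : (l : ℕ) < lhat
          · rw [if_pos hl]
            exact op_mem (hP l) (by rw [heq l hl]; exact hvS0)
          · rw [if_neg hl]
            have hle : i ≤ l := by simp [Fin.le_def, hi]; omega
            have : (S i)ᗮ ≤ (S l)ᗮ := Submodule.orthogonal_le (hmono i l hle)
            exact op_orth (hP l) (this hvorth)
        calc ∑ l, P l v = ∑ l : Fin L, (if (l : ℕ) < lhat then (1:ℝ) else 0) • v := by
              refine Finset.sum_congr rfl fun l _ => ?_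
              rw [hterm l, ite_smul, one_smul, zero_smul]
          _ = (∑ l : Fin L, (if (l : ℕ) < lhat then (1:ℝ) else 0)) • v := by
              rw [Finset.sum_smul]
          _ = (lhat : ℝ) • v := by rw [ite_sum_eq L lhat (le_of_lt hlt), mul_one]
      exact Module.End.hasEigenvalue_of_hasEigenvector ⟨Module.End.mem_eigenspace_iff.mpr hsum, hvne⟩
  -- lower bound for nonzero eigenvalues
  have lower : ∀ μ : ℝ, Module.End.HasEigenvalue (∑ l, P l) μ → μ ≠ 0 →
      (lhat : ℝ) ≤ μ := by
    intro μ hμ hμ0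
    obtain ⟨v, hv, hvne⟩ := hμ.exists_hasEigenvector
    have hv' : (∑ l, P l) v = μ • v := Module.End.mem_eigenspace_iff.mp hv
    have hk := key μ v hv'
    -- v ∈ S 0
    have hvS0 : v ∈ S ⟨0, hL⟩ := by
      have hsm : μ • v ∈ S ⟨0, hL⟩ := by
        rw [← hv', apply_sum]
        exact Submodule.sum_mem _ fun l _ =>
          hmono ⟨0, hL⟩ l (by simp [Fin.le_def]) (hP l v).1
      have := Submodule.smul_mem (S ⟨0, hL⟩) μ⁻¹ hsm
      rwa [smul_smul, inv_mul_cancel₀ hμ0, one_smul] at this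
    have hbd : ∑ l : Fin L, (if (l : ℕ) < lhat then ‖v‖ ^ 2 else 0)
        ≤ ∑ l : Fin L, ‖P l v‖ ^ 2 := by
      refine Finset.sum_le_sum fun l _ => ?_
      by_cases hl : (l : ℕ) < lhat
      · rw [if_pos hl]
        have : P l v = v := op_mem (hP l) (by rw [heq l hl]; exact hvS0)
        rw [this]
      · rw [if_neg hl]; positivity
    rw [ite_sum_eq L lhat h2] at hbd
    have hpos : 0 < ‖v‖ ^ 2 := pow_pos (norm_pos_iff.mpr hvne) 2
    nlinarith
  exact ⟨⟨Module.End.hasEigenvalue_of_hasEigenvector ⟨Module.End.mem_eigenspace_iff.mpr hevL, hv₀⟩, upper⟩,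
    ⟨hev_lhat, lower⟩⟩
end
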